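/- arXiv:1207.0910 — 2 statements merged into one kernel-verified Lean document; each statement's English description precedes it below -/
import Mathlib

section
/- Let q : ℝ^m → ℝ^N be a second-order random vector with covariance C and W a symmetric positive definite matrix. Among all families {e^1, ..., e^d} of W-orthonormal vectors in ℝ^N, the projection error ∫ ‖(q − q̄) − Σ_{j=1}^d ((q − q̄)^T W e^j) e^j‖_W² dP_ξ is minimized by taking e^j equal to the first d W-orthonormal generalized eigenvectors of W^T C W φ = λ W φ (ordered by decreasing eigenvalue), and the minimal error equals Σ_{j=d+1}^N λ_j. -/
open MeasureTheory Matrix Finset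


private lemma dot_sym {N : ℕ} {W : Matrix (Fin N) (Fin N) ℝ} (h : W.IsSymm)
    (a b : Fin N → ℝ) : a ⬝ᵥ (W *ᵥ b) = b ⬝ᵥ (W *ᵥ a) := by
  rw [Matrix.dotProduct_mulVec, ← Matrix.mulVec_transpose, h.eq, dotProduct_comm]

private lemma mulVec_sum' {N d : ℕ} (W : Matrix (Fin N) (Fin N) ℝ) (v : Fin d → Fin N → ℝ) :
    W *ᵥ (∑ j, v j) = ∑ j, W *ᵥ v j := by
  ext i
  simp only [Matrix.mulVec, dotProduct, Finset.sum_apply, Finset.mul_sum]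
  exact Finset.sum_comm

private lemma dot_sum {N d : ℕ} (a : Fin N → ℝ) (v : Fin d → Fin N → ℝ) :
    a ⬝ᵥ (∑ j, v j) = ∑ j, a ⬝ᵥ v j := by
  simp only [dotProduct, Finset.sum_apply, Finset.mul_sum]
  exact Finset.sum_comm

private lemma err_eq {N d : ℕ} {W : Matrix (Fin N) (Fin N) ℝ} (hWs : W.IsSymm)
    (e : Fin d → Fin N → ℝ)
    (he : ∀ i j, e i ⬝ᵥ (W *ᵥ e j) = if i = j then 1 else 0)
    (y : Fin N → ℝ) :
    (y - ∑ j, (y ⬝ᵥ (W *ᵥ e j)) • e j) ⬝ᵥ (W *ᵥ (y - ∑ j, (y ⬝ᵥ (W *ᵥ e j)) • e j))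
      = y ⬝ᵥ (W *ᵥ y) - ∑ j, (y ⬝ᵥ (W *ᵥ e j))^2 := by
  set c : Fin d → ℝ := fun j => y ⬝ᵥ (W *ᵥ e j) with hc
  set s : Fin N → ℝ := ∑ j, c j • e j with hs
  have h1 : ∀ v : Fin N → ℝ, v ⬝ᵥ (W *ᵥ s) = ∑ j, c j * (v ⬝ᵥ (W *ᵥ e j)) := by
    intro v
    rw [hs, mulVec_sum', dot_sum]
    refine Finset.sum_congr rfl fun j _ => ?_
    rw [Matrix.mulVec_smul, dotProduct_smul, smul_eq_mul]
  have h2 : ∀ v : Fin N → ℝ, s ⬝ᵥ (W *ᵥ v) = ∑ j, c j * (e j ⬝ᵥ (W *ᵥ v)) := by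
    intro v
    rw [dot_sym hWs, h1]
    exact Finset.sum_congr rfl fun j _ => by rw [dot_sym hWs]
  have hys : y ⬝ᵥ (W *ᵥ s) = ∑ j, (c j)^2 := by
    rw [h1]; exact Finset.sum_congr rfl fun j _ => by rw [sq]
  have hsy : s ⬝ᵥ (W *ᵥ y) = ∑ j, (c j)^2 := by rw [dot_sym hWs]; exact hys
  have hss : s ⬝ᵥ (W *ᵥ s) = ∑ j, (c j)^2 := by
    rw [h2]
    refine Finset.sum_congr rfl fun j _ => ?_
    rw [h1 (e j)]
    have hterm : ∀ k, c k * (e j ⬝ᵥ (W *ᵥ e k)) = if k = j then c j * 1 else c k * 0 := by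
      intro k; rw [he j k]
      rcases eq_or_ne k j with h | h
      · subst h; simp
      · simp only [if_neg h, if_neg (Ne.symm h), mul_zero]
    rw [Finset.sum_congr rfl fun k _ => hterm k]
    simp [sq]
  rw [Matrix.mulVec_sub, sub_dotProduct, dotProduct_sub, dotProduct_sub,
    hys, hsy, hss]
  ring

private lemma sum_castLE {N d : ℕ} (hd : d ≤ N) (f : Fin N → ℝ) :
    ∑ j : Fin d, f (Fin.castLE hd j)
      = ∑ k ∈ Finset.univ.filter (fun k : Fin N => (k : ℕ) < d), f k := by
  refine Finset.sum_bij' (fun j _ => Fin.castLE hd j)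
    (fun k hk => ⟨(k : ℕ), by simpa using hk⟩) ?_ ?_ ?_ ?_ ?_
  · intro j _; simp
  · intro k _; simp
  · intro j _; simp
  · intro k _; simp
  · intro j _; rfl

private lemma comb {N d : ℕ} (hd : d ≤ N) (lam t : Fin N → ℝ)
    (hdecr : ∀ i j : Fin N, i ≤ j → lam j ≤ lam i)
    (ht0 : ∀ k, 0 ≤ t k) (ht1 : ∀ k, t k ≤ 1) (hts : ∑ k, t k = d) :
    ∑ k, lam k * t k ≤ ∑ k ∈ Finset.univ.filter (fun k : Fin N => (k : ℕ) < d), lam k := by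
  rcases Nat.eq_zero_or_pos N with hN | hN
  · subst hN
    simp
  · set K : Fin N := ⟨min d (N - 1), by omega⟩ with hK
    set cc : ℝ := lam K with hcc
    set P : Fin N → Prop := fun k => (k : ℕ) < d with hP
    have hone : ∑ k ∈ Finset.univ.filter P, (1 : ℝ) = d := by
      rw [← sum_castLE hd (fun _ => (1 : ℝ))]; simp
    have hA : ∑ k ∈ Finset.univ.filter P, lam k * t k
        ≤ ∑ k ∈ Finset.univ.filter P, (lam k + cc * (t k - 1)) := by
      refine Finset.sum_le_sum fun k hk => ?_
      have hk' : (k : ℕ) < d := by simpa [hP] using hk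
      have h1 : cc ≤ lam k := hdecr k K (by rw [Fin.le_def]; have := k.isLt; simp [hK]; omega)
      have h2 := ht1 k
      nlinarith
    have hB : ∑ k ∈ Finset.univ.filter (fun k => ¬ P k), lam k * t k
        ≤ ∑ k ∈ Finset.univ.filter (fun k => ¬ P k), cc * t k := by
      refine Finset.sum_le_sum fun k hk => ?_
      have hk' : d ≤ (k : ℕ) := by simpa [hP] using hk
      have h1 : lam k ≤ cc := hdecr K k (by rw [Fin.le_def]; simp [hK]; omega)
      have h2 := ht0 k
      nlinarith
    have hsplit : ∑ k ∈ Finset.univ.filter P, t k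
        + ∑ k ∈ Finset.univ.filter (fun k => ¬ P k), t k = d := by
      rw [Finset.sum_filter_add_sum_filter_not]; exact hts
    have hsplit2 : ∑ k, lam k * t k = ∑ k ∈ Finset.univ.filter P, lam k * t k
        + ∑ k ∈ Finset.univ.filter (fun k => ¬ P k), lam k * t k :=
      (Finset.sum_filter_add_sum_filter_not _ _ _).symm
    have hAexp : ∑ k ∈ Finset.univ.filter P, (lam k + cc * (t k - 1))
        = ∑ k ∈ Finset.univ.filter P, lam k
          + cc * ((∑ k ∈ Finset.univ.filter P, t k) - d) := by
      rw [Finset.sum_add_distrib, ← Finset.mul_sum]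
      rw [Finset.sum_sub_distrib, hone]
    have hBexp : ∑ k ∈ Finset.univ.filter (fun k => ¬ P k), cc * t k
        = cc * ∑ k ∈ Finset.univ.filter (fun k => ¬ P k), t k := by
      rw [Finset.mul_sum]
    have hzero : cc * ((∑ k ∈ Finset.univ.filter P, t k) - d)
        + cc * ∑ k ∈ Finset.univ.filter (fun k => ¬ P k), t k = 0 := by
      have h0 : (∑ k ∈ Finset.univ.filter P, t k) - (d : ℝ)
          + ∑ k ∈ Finset.univ.filter (fun k => ¬ P k), t k = 0 := by linarith [hsplit]
      calc cc * ((∑ k ∈ Finset.univ.filter P, t k) - d)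
          + cc * ∑ k ∈ Finset.univ.filter (fun k => ¬ P k), t k
          = cc * (((∑ k ∈ Finset.univ.filter P, t k) - d)
            + ∑ k ∈ Finset.univ.filter (fun k => ¬ P k), t k) := by ring
        _ = cc * 0 := by rw [h0]
        _ = 0 := mul_zero cc
    linarith [hA, hB, hAexp, hBexp, hsplit2, hzero]

section
variable {N : ℕ} {C W : Matrix (Fin N) (Fin N) ℝ} {lam : Fin N → ℝ} {φ : Fin N → Fin N → ℝ}

private lemma phiMat_orth (horth : ∀ i j, φ i ⬝ᵥ (W *ᵥ φ j) = if i = j then 1 else 0) :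
    ((Matrix.of fun i j => φ j i)ᵀ * W) * (Matrix.of fun i j => φ j i) = 1 := by
  ext i j
  have h := horth i j
  simp only [Matrix.mul_apply, Matrix.transpose_apply, Matrix.of_apply, dotProduct,
    Matrix.mulVec, Matrix.one_apply, Finset.sum_mul, Finset.mul_sum] at h ⊢
  rw [Finset.sum_comm]
  rw [← h]
  exact Finset.sum_congr rfl fun k _ => Finset.sum_congr rfl fun l _ => by ring

private lemma phiMat_mulVec (u : Fin N → ℝ) :
    (Matrix.of fun i j => φ j i) *ᵥ u = ∑ k, u k • φ k := by
  ext i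
  simp [Matrix.mulVec, dotProduct, Finset.sum_apply, mul_comm]

private lemma phiMat_coord (u : Fin N → ℝ) (k : Fin N) :
    (((Matrix.of fun i j => φ j i)ᵀ * W) *ᵥ u) k = φ k ⬝ᵥ (W *ᵥ u) := by
  rw [← Matrix.mulVec_mulVec]
  simp [Matrix.mulVec, dotProduct]

private lemma expand_vec (horth : ∀ i j, φ i ⬝ᵥ (W *ᵥ φ j) = if i = j then 1 else 0)
    (v : Fin N → ℝ) : v = ∑ k, (φ k ⬝ᵥ (W *ᵥ v)) • φ k := by
  set Φ : Matrix (Fin N) (Fin N) ℝ := Matrix.of fun i j => φ j i with hΦ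
  have h1 : Φ * (Φᵀ * W) = 1 := mul_eq_one_comm.mpr (phiMat_orth horth)
  have h2 : Φ *ᵥ ((Φᵀ * W) *ᵥ v) = v := by
    rw [Matrix.mulVec_mulVec, h1, Matrix.one_mulVec]
  have h3 : Φ *ᵥ ((Φᵀ * W) *ᵥ v) = ∑ k, (φ k ⬝ᵥ (W *ᵥ v)) • φ k := by
    rw [phiMat_mulVec]
    exact Finset.sum_congr rfl fun k _ => by rw [phiMat_coord]
  rw [← h3, h2]

private lemma trace_eq (hWsymm : W.IsSymm)
    (hCWφ : ∀ j, C *ᵥ (W *ᵥ φ j) = lam j • φ j)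
    (horth : ∀ i j, φ i ⬝ᵥ (W *ᵥ φ j) = if i = j then 1 else 0) :
    ∑ i, ∑ k, W i k * C i k = ∑ j, lam j := by
  set Φ : Matrix (Fin N) (Fin N) ℝ := Matrix.of fun i j => φ j i with hΦ
  have hPΦ : (Φᵀ * W) * Φ = 1 := phiMat_orth horth
  have hΦP : Φ * (Φᵀ * W) = 1 := mul_eq_one_comm.mpr hPΦ
  have hCWΦ : C * W * Φ = Φ * Matrix.diagonal lam := by
    ext i j
    rw [Matrix.mul_diagonal]
    have h : (C * W * Φ) i j = ((C * W) *ᵥ φ j) i := by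
      simp [hΦ, Matrix.mul_apply, Matrix.mulVec, dotProduct]
    rw [h, ← Matrix.mulVec_mulVec, hCWφ j]
    simp [hΦ, mul_comm]
  have hfact : C * W = Φ * Matrix.diagonal lam * (Φᵀ * W) := by
    calc C * W = (C * W) * (Φ * (Φᵀ * W)) := by rw [hΦP, Matrix.mul_one]
      _ = ((C * W) * Φ) * (Φᵀ * W) := by rw [← Matrix.mul_assoc]
      _ = _ := by rw [hCWΦ]
  have htr : (C * W).trace = ∑ j, lam j := by
    rw [hfact, Matrix.trace_mul_comm, ← Matrix.mul_assoc, hPΦ, Matrix.one_mul,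
      Matrix.trace_diagonal]
  rw [← htr]
  simp only [Matrix.trace, Matrix.diag, Matrix.mul_apply]
  exact Finset.sum_congr rfl fun i _ => Finset.sum_congr rfl fun k _ => by
    rw [mul_comm]
    congr 1
    exact (hWsymm.apply i k).symm
end

private lemma dot_mulVec_sum {N d : ℕ} (W : Matrix (Fin N) (Fin N) ℝ) (v : Fin N → ℝ)
    (c : Fin d → ℝ) (g : Fin d → Fin N → ℝ) :
    v ⬝ᵥ (W *ᵥ ∑ j, c j • g j) = ∑ j, c j * (v ⬝ᵥ (W *ᵥ g j)) := by
  rw [mulVec_sum', dot_sum]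
  exact Finset.sum_congr rfl fun j _ => by
    rw [Matrix.mulVec_smul, dotProduct_smul, smul_eq_mul]

private lemma mulVec_sum_smul {N d : ℕ} (W : Matrix (Fin N) (Fin N) ℝ)
    (c : Fin d → ℝ) (g : Fin d → Fin N → ℝ) :
    W *ᵥ (∑ j, c j • g j) = ∑ j, c j • (W *ᵥ g j) := by
  rw [mulVec_sum']
  exact Finset.sum_congr rfl fun j _ => Matrix.mulVec_smul _ _ _


/-- Optimality of the (weighted) Karhunen–Loève decomposition.  Among all
`W`-orthonormal families `{e^1,...,e^d}` in `ℝ^N`, the mean-square `W`-weighted projection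
error `∫ ‖(q−q̄) − Σ_j ((q−q̄)ᵀ W e^j) e^j‖_W² dμ` is minimized by taking the `e^j` equal to
the first `d` `W`-orthonormal generalized eigenvectors of `Wᵀ C W φ = λ W φ` (ordered by
decreasing eigenvalue), and the minimal error equals `Σ_{j≥d} λ_j`. -/
theorem stmt_8 {m N : ℕ}
    (μ : Measure (Fin m → ℝ)) [IsProbabilityMeasure μ]
    (q : (Fin m → ℝ) → (Fin N → ℝ))
    (hq : ∀ i, MemLp (fun x => q x i) 2 μ)
    (qbar : Fin N → ℝ) (hqbar : ∀ i, qbar i = ∫ x, q x i ∂μ)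
    (C W : Matrix (Fin N) (Fin N) ℝ)
    (hC : ∀ i j, C i j = ∫ x, (q x i - qbar i) * (q x j - qbar j) ∂μ)
    (hWsymm : W.IsSymm) (hW : W.PosDef)
    (lam : Fin N → ℝ) (φ : Fin N → (Fin N → ℝ))
    (hdecr : ∀ i j : Fin N, i ≤ j → lam j ≤ lam i)
    (heig : ∀ j, (Wᵀ * C * W) *ᵥ φ j = lam j • (W *ᵥ φ j))
    (horth : ∀ i j, φ i ⬝ᵥ (W *ᵥ φ j) = if i = j then 1 else 0)
    (d : ℕ) (hd : d ≤ N) :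
    (∀ e : Fin d → (Fin N → ℝ),
        (∀ i j, e i ⬝ᵥ (W *ᵥ e j) = if i = j then 1 else 0) →
        (∑ j ∈ Finset.univ.filter (fun j : Fin N => d ≤ (j : ℕ)), lam j) ≤
          ∫ x, (let r := (q x - qbar) - ∑ j : Fin d, ((q x - qbar) ⬝ᵥ (W *ᵥ e j)) • e j
                r ⬝ᵥ (W *ᵥ r)) ∂μ) ∧
    (∫ x, (let r := (q x - qbar) -
              ∑ j : Fin d, ((q x - qbar) ⬝ᵥ (W *ᵥ φ (Fin.castLE hd j))) • φ (Fin.castLE hd j)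
           r ⬝ᵥ (W *ᵥ r)) ∂μ =
        ∑ j ∈ Finset.univ.filter (fun j : Fin N => d ≤ (j : ℕ)), lam j) := by
  classical
  have hY2 : ∀ i, MemLp (fun x => q x i - qbar i) 2 μ :=
    fun i => (hq i).sub (memLp_const (qbar i))
  have hInt : ∀ i k, Integrable (fun x => (q x i - qbar i) * (q x k - qbar k)) μ := by
    intro i k
    exact memLp_one_iff_integrable.mp
      ((hY2 k).smul (hY2 i))
  have hCik : ∀ i k, ∫ x, (q x i - qbar i) * (q x k - qbar k) ∂μ = C i k :=
    fun i k => (hC i k).symm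
  -- squared dot products against a fixed vector
  have hIdot : ∀ v : Fin N → ℝ,
      Integrable (fun x => ((q x - qbar) ⬝ᵥ v)^2) μ := by
    intro v
    have hfun : (fun x => ((q x - qbar) ⬝ᵥ v)^2)
        = fun x => ∑ i, ∑ k, v i * v k * ((q x i - qbar i) * (q x k - qbar k)) := by
      funext x
      rw [sq, dotProduct, Finset.sum_mul_sum]
      exact Finset.sum_congr rfl fun i _ => Finset.sum_congr rfl fun k _ => by
        show (q x - qbar) i * v i * ((q x - qbar) k * v k) = _
        show (q x i - qbar i) * v i * ((q x k - qbar k) * v k) = _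
        ring
    rw [hfun]
    exact integrable_finset_sum _ fun i _ => integrable_finset_sum _ fun k _ =>
      ((hInt i k).const_mul _)
  have hIdotval : ∀ v : Fin N → ℝ,
      ∫ x, ((q x - qbar) ⬝ᵥ v)^2 ∂μ = ∑ i, ∑ k, v i * v k * C i k := by
    intro v
    have hfun : (fun x => ((q x - qbar) ⬝ᵥ v)^2)
        = fun x => ∑ i, ∑ k, v i * v k * ((q x i - qbar i) * (q x k - qbar k)) := by
      funext x
      rw [sq, dotProduct, Finset.sum_mul_sum]
      exact Finset.sum_congr rfl fun i _ => Finset.sum_congr rfl fun k _ => by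
        show (q x i - qbar i) * v i * ((q x k - qbar k) * v k) = _
        ring
    calc ∫ x, ((q x - qbar) ⬝ᵥ v)^2 ∂μ
        = ∫ x, ∑ i, ∑ k, v i * v k * ((q x i - qbar i) * (q x k - qbar k)) ∂μ := by
          rw [hfun]
      _ = ∑ i, ∑ k, v i * v k * C i k := by
          rw [integral_finset_sum _ (fun i _ => integrable_finset_sum _ fun k _ =>
            ((hInt i k).const_mul _))]
          refine Finset.sum_congr rfl fun i _ => ?_
          rw [integral_finset_sum _ (fun k _ => (hInt i k).const_mul _)]
          refine Finset.sum_congr rfl fun k _ => ?_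
          rw [MeasureTheory.integral_const_mul, hCik]
  -- the weighted norm of q - qbar
  have hWfun : (fun x => (q x - qbar) ⬝ᵥ (W *ᵥ (q x - qbar)))
      = fun x => ∑ i, ∑ k, W i k * ((q x i - qbar i) * (q x k - qbar k)) := by
    funext x
    simp only [dotProduct, Matrix.mulVec, Finset.mul_sum]
    refine Finset.sum_congr rfl fun i _ => Finset.sum_congr rfl fun k _ => by
      show (q x - qbar) i * (W i k * (q x - qbar) k) = _
      show (q x i - qbar i) * (W i k * (q x k - qbar k)) = _
      ring
  have hIW : Integrable (fun x => (q x - qbar) ⬝ᵥ (W *ᵥ (q x - qbar))) μ := by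
    rw [hWfun]
    exact integrable_finset_sum _ fun i _ => integrable_finset_sum _ fun k _ =>
      ((hInt i k).const_mul _)
  have hIWval : ∫ x, (q x - qbar) ⬝ᵥ (W *ᵥ (q x - qbar)) ∂μ = ∑ i, ∑ k, W i k * C i k := by
    rw [hWfun]
    refine (integral_finset_sum _ (fun i _ => integrable_finset_sum _ fun k _ =>
      ((hInt i k).const_mul _))).trans ?_
    refine Finset.sum_congr rfl fun i _ => ?_
    refine (integral_finset_sum _ (fun k _ => (hInt i k).const_mul _)).trans ?_
    exact Finset.sum_congr rfl fun k _ => by rw [MeasureTheory.integral_const_mul, hCik]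
  -- eigen relation in convenient form
  have hWinj : Function.Injective (W.mulVec) :=
    (Matrix.mulVec_injective_iff_isUnit).mpr hW.isUnit
  have hCWφ : ∀ j, C *ᵥ (W *ᵥ φ j) = lam j • φ j := by
    intro j
    apply hWinj
    have h := heig j
    rw [hWsymm.eq] at h
    calc W *ᵥ (C *ᵥ (W *ᵥ φ j)) = (W * C * W) *ᵥ φ j := by
          rw [Matrix.mulVec_mulVec, Matrix.mulVec_mulVec]
      _ = lam j • (W *ᵥ φ j) := h
      _ = W *ᵥ (lam j • φ j) := (Matrix.mulVec_smul _ _ _).symm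
  -- identification of the quadratic form
  have hS : ∀ u : Fin N → ℝ,
      ∑ i, ∑ k, (W *ᵥ u) i * (W *ᵥ u) k * C i k = (W *ᵥ u) ⬝ᵥ (C *ᵥ (W *ᵥ u)) := by
    intro u
    simp only [dotProduct]
    refine Finset.sum_congr rfl fun i _ => ?_
    show _ = (W *ᵥ u) i * ∑ k, C i k * (W *ᵥ u) k
    rw [Finset.mul_sum]
    exact Finset.sum_congr rfl fun k _ => by ring
  -- value of the projection error for any W-orthonormal family
  have hval : ∀ e : Fin d → (Fin N → ℝ),
      (∀ i j, e i ⬝ᵥ (W *ᵥ e j) = if i = j then 1 else 0) →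
      (∫ x, (let r := (q x - qbar) - ∑ j : Fin d, ((q x - qbar) ⬝ᵥ (W *ᵥ e j)) • e j
            r ⬝ᵥ (W *ᵥ r)) ∂μ)
        = (∑ j, lam j) - ∑ j : Fin d, (W *ᵥ e j) ⬝ᵥ (C *ᵥ (W *ᵥ e j)) := by
    intro e he
    have hpt : (fun x => (let r := (q x - qbar) - ∑ j : Fin d, ((q x - qbar) ⬝ᵥ (W *ᵥ e j)) • e j
            r ⬝ᵥ (W *ᵥ r)))
        = fun x => (q x - qbar) ⬝ᵥ (W *ᵥ (q x - qbar))
            - ∑ j : Fin d, ((q x - qbar) ⬝ᵥ (W *ᵥ e j))^2 :=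
      funext fun x => err_eq hWsymm e he (q x - qbar)
    rw [hpt, integral_sub hIW (integrable_finset_sum _ fun j _ => hIdot _), hIWval,
      integral_finset_sum _ (fun j _ => hIdot _)]
    congr 1
    · exact trace_eq hWsymm hCWφ horth
    · refine Finset.sum_congr rfl fun j _ => ?_
      rw [hIdotval, hS]
  -- splitting of the full spectral sum
  have hsplit : ∑ j, lam j
      = (∑ k ∈ Finset.univ.filter (fun k : Fin N => (k : ℕ) < d), lam k)
        + ∑ k ∈ Finset.univ.filter (fun k : Fin N => d ≤ (k : ℕ)), lam k := by
    rw [← Finset.sum_filter_add_sum_filter_not Finset.univ (fun k : Fin N => (k : ℕ) < d) lam]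
    congr 2
    exact Finset.filter_congr fun k _ => by simp [not_lt]
  constructor
  · intro e he
    rw [hval e he]
    set c : Fin d → Fin N → ℝ := fun j k => e j ⬝ᵥ (W *ᵥ φ k) with hcdef
    have hexp : ∀ j, e j = ∑ k, c j k • φ k := by
      intro j
      conv_lhs => rw [expand_vec horth (e j)]
      exact Finset.sum_congr rfl fun k _ => by rw [dot_sym hWsymm]
    have hBj : ∀ j, (W *ᵥ e j) ⬝ᵥ (C *ᵥ (W *ᵥ e j)) = ∑ k, lam k * (c j k)^2 := by
      intro j
      have h1 : C *ᵥ (W *ᵥ e j) = ∑ k, (c j k * lam k) • φ k := by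
        conv_lhs => rw [hexp j]
        calc C *ᵥ (W *ᵥ ∑ k, c j k • φ k)
            = C *ᵥ (∑ k, c j k • (W *ᵥ φ k)) := by
              exact congrArg (fun z => C *ᵥ z) (mulVec_sum_smul W (c j) φ)
          _ = ∑ k, c j k • (C *ᵥ (W *ᵥ φ k)) := mulVec_sum_smul C (c j) _
          _ = ∑ k, (c j k * lam k) • φ k :=
              Finset.sum_congr rfl fun k _ => by rw [hCWφ k, smul_smul]
      rw [h1, dot_sum]
      refine Finset.sum_congr rfl fun k _ => ?_
      rw [dotProduct_smul, smul_eq_mul, dotProduct_comm, dot_sym hWsymm]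
      show c j k * lam k * (c j k) = _
      ring
    have hpar : ∀ j, ∑ k, (c j k)^2 = 1 := by
      intro j
      have h1 : e j ⬝ᵥ (W *ᵥ e j) = 1 := by rw [he j j]; simp
      calc ∑ k, (c j k)^2 = ∑ k, c j k * (e j ⬝ᵥ (W *ᵥ φ k)) :=
            Finset.sum_congr rfl fun k _ => by rw [sq]
        _ = e j ⬝ᵥ (W *ᵥ ∑ k, c j k • φ k) := (dot_mulVec_sum W (e j) (c j) φ).symm
        _ = e j ⬝ᵥ (W *ᵥ e j) := by rw [← hexp j]
        _ = 1 := h1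
    have hbes : ∀ k, ∑ j : Fin d, (c j k)^2 ≤ 1 := by
      intro k
      have h0 : 0 ≤ (φ k - ∑ j, (φ k ⬝ᵥ (W *ᵥ e j)) • e j)
          ⬝ᵥ (W *ᵥ (φ k - ∑ j, (φ k ⬝ᵥ (W *ᵥ e j)) • e j)) := by
        simpa using hW.posSemidef.re_dotProduct_nonneg
          (φ k - ∑ j, (φ k ⬝ᵥ (W *ᵥ e j)) • e j)
      rw [err_eq hWsymm e he (φ k)] at h0
      have h1 : φ k ⬝ᵥ (W *ᵥ φ k) = 1 := by rw [horth k k]; simp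
      rw [h1] at h0
      have h2 : ∑ j : Fin d, (φ k ⬝ᵥ (W *ᵥ e j))^2 = ∑ j : Fin d, (c j k)^2 :=
        Finset.sum_congr rfl fun j _ => by rw [dot_sym hWsymm]
      linarith [h0, h2.symm.le, h2.le]
    have hts : ∑ k, (∑ j : Fin d, (c j k)^2) = (d : ℝ) := by
      rw [Finset.sum_comm]
      calc ∑ j : Fin d, ∑ k, (c j k)^2 = ∑ j : Fin d, (1 : ℝ) :=
            Finset.sum_congr rfl fun j _ => hpar j
        _ = d := by simp
    have hkey : ∑ j : Fin d, (W *ᵥ e j) ⬝ᵥ (C *ᵥ (W *ᵥ e j))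
        ≤ ∑ k ∈ Finset.univ.filter (fun k : Fin N => (k : ℕ) < d), lam k := by
      calc ∑ j : Fin d, (W *ᵥ e j) ⬝ᵥ (C *ᵥ (W *ᵥ e j))
          = ∑ j : Fin d, ∑ k, lam k * (c j k)^2 :=
            Finset.sum_congr rfl fun j _ => hBj j
        _ = ∑ k, lam k * (∑ j : Fin d, (c j k)^2) := by
            rw [Finset.sum_comm]
            exact Finset.sum_congr rfl fun k _ => by rw [Finset.mul_sum]
        _ ≤ _ := comb hd lam (fun k => ∑ j : Fin d, (c j k)^2) hdecr
            (fun k => Finset.sum_nonneg fun j _ => sq_nonneg _) hbes hts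
    linarith [hsplit, hkey]
  · have he2 : ∀ i j : Fin d, φ (Fin.castLE hd i) ⬝ᵥ (W *ᵥ φ (Fin.castLE hd j))
        = if i = j then 1 else 0 := by
      intro i j
      rw [horth]
      simp [Fin.castLE_inj]
    have h := hval (fun j => φ (Fin.castLE hd j)) he2
    simp only [] at h
    rw [h]
    have hBφ : ∀ k, (W *ᵥ φ k) ⬝ᵥ (C *ᵥ (W *ᵥ φ k)) = lam k := by
      intro k
      rw [hCWφ k, dotProduct_smul, smul_eq_mul, dotProduct_comm, horth k k]
      simp
    have hsum : ∑ j : Fin d, (W *ᵥ φ (Fin.castLE hd j)) ⬝ᵥ (C *ᵥ (W *ᵥ φ (Fin.castLE hd j)))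
        = ∑ k ∈ Finset.univ.filter (fun k : Fin N => (k : ℕ) < d), lam k := by
      rw [← sum_castLE hd lam]
      exact Finset.sum_congr rfl fun j _ => hBφ _
    rw [hsum]
    linarith [hsplit]
end

section
/- Let P = P_1 × ... × P_n be a product probability measure on ℝ^n and suppose for each j and each level l ≥ 1 a univariate quadrature rule Q_j^{λ_l} is given which integrates exactly univariate polynomials up to degree 2l−1 with respect to P_j. Then the Smolyak sparse-grid quadrature rule of level λ, Q^λ(f) = Σ_{λ ≤ |l| ≤ λ+n−1} (−1)^{λ+n−1−|l|} C(n−1, λ+n−1−|l|) (Q_1^{λ_{l_1}} ⊗ ... ⊗ Q_n^{λ_{l_n}})(f), integrates exactly all multivariate polynomials of total degree at most 2λ−1 with respect to P. -/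
open MeasureTheory Finset

/-- The fully tensorized quadrature rule with level vector `l`, applied to `f`. -/
def tensorRule {n : ℕ} (K : Fin n → ℕ → ℕ)
    (x : ∀ (j : Fin n) (l : ℕ), Fin (K j l) → ℝ)
    (v : ∀ (j : Fin n) (l : ℕ), Fin (K j l) → ℝ)
    (l : Fin n → ℕ) (f : (Fin n → ℝ) → ℝ) : ℝ :=
  ∑ k ∈ Fintype.piFinset (fun j => (Finset.univ : Finset (Fin (K j (l j))))),
    (∏ j, v j (l j) (k j)) * f (fun j => x j (l j) (k j))

/-- The Smolyak sparse-grid quadrature rule of level `lam`, applied to `f`: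
`Q^λ(f) = Σ_{λ ≤ |l| ≤ λ+n−1} (−1)^{λ+n−1−|l|} C(n−1, λ+n−1−|l|) (Q_1^{l_1} ⊗ ... ⊗ Q_n^{l_n})(f)`,
where each `l_j ≥ 1`. -/
def smolyakRule {n : ℕ} (K : Fin n → ℕ → ℕ)
    (x : ∀ (j : Fin n) (l : ℕ), Fin (K j l) → ℝ)
    (v : ∀ (j : Fin n) (l : ℕ), Fin (K j l) → ℝ)
    (lam : ℕ) (f : (Fin n → ℝ) → ℝ) : ℝ :=
  ∑ l ∈ (Fintype.piFinset fun _ : Fin n => Finset.Icc 1 (lam + n)).filter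
      (fun l => lam ≤ ∑ j, l j ∧ ∑ j, l j ≤ lam + n - 1),
    ((-1 : ℝ) ^ (lam + n - 1 - ∑ j, l j)) *
      (Nat.choose (n - 1) (lam + n - 1 - ∑ j, l j) : ℝ) *
      tensorRule K x v l f


section Aux
open Polynomial

lemma coeff_one_sub_X_pow (r t : ℕ) :
    ((1 - X : Polynomial ℝ) ^ r).coeff t = (-1 : ℝ) ^ t * (r.choose t : ℝ) := by
  have h : (1 - X : Polynomial ℝ) ^ r
      = ∑ m ∈ range (r + 1), Polynomial.C ((-1 : ℝ) ^ m * (r.choose m : ℝ)) * X ^ m := by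
    have h0 : (1 - X : Polynomial ℝ) = (-X) + 1 := by ring
    rw [h0, add_pow]
    refine Finset.sum_congr rfl fun m _ => ?_
    rw [neg_pow, map_mul, map_pow, map_neg, map_one, Polynomial.C_eq_natCast]
    ring
  rw [h, finset_sum_coeff]
  simp only [Polynomial.coeff_C_mul, Polynomial.coeff_X_pow]
  rw [Finset.sum_congr rfl (fun m _ => by rw [mul_ite, mul_one, mul_zero])]
  rw [Finset.sum_ite_eq (range (r + 1)) t fun m => (-1 : ℝ) ^ m * (r.choose m : ℝ)]
  split_ifs with ht
  · rfl
  · rw [mem_range, not_lt] at ht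
    rw [Nat.choose_eq_zero_of_lt (by omega)]
    ring

/-- Telescoping: if `P * (1 - X) = Q` then the coefficients of `P` are partial sums of those
of `Q`. -/
lemma coeff_of_mul_one_sub (P Q : Polynomial ℝ) (h : P * (1 - X) = Q) (S : ℕ) :
    P.coeff S = ∑ t ∈ range (S + 1), Q.coeff t := by
  have hP : P = Q + P * X := by rw [← h]; ring
  induction S with
  | zero =>
      rw [Finset.sum_range_one]
      conv_lhs => rw [hP]
      simp
  | succ S ih =>
      rw [Finset.sum_range_succ, ← ih]
      conv_lhs => rw [hP]
      rw [Polynomial.coeff_add, Polynomial.coeff_mul_X]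
      ring

/-- Coefficients (below `b`) of `∏ j, (X ^ a j - X ^ b)`. -/
lemma coeff_prod_X_pow_sub {n : ℕ} (b : ℕ) : ∀ (a : Fin n → ℕ), (∀ t < b,
    (∏ j, ((X : Polynomial ℝ) ^ a j - X ^ b)).coeff t
      = if t = ∑ j, a j then 1 else 0) := by
  induction n with
  | zero =>
      intro a t ht
      simp [Polynomial.coeff_one]
  | succ n ih =>
      intro a t ht
      rw [Fin.prod_univ_succ, Fin.sum_univ_succ, sub_mul, Polynomial.coeff_sub,
        Polynomial.coeff_X_pow_mul', Polynomial.coeff_X_pow_mul',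
        if_neg (show ¬ b ≤ t by omega), sub_zero]
      by_cases h0 : a 0 ≤ t
      · rw [if_pos h0, ih (fun j => a (Fin.succ j)) (t - a 0) (by omega)]
        have hiff : (t - a 0 = ∑ j : Fin n, a (Fin.succ j))
            ↔ (t = a 0 + ∑ j : Fin n, a (Fin.succ j)) := by omega
        simp [hiff]
      · rw [if_neg h0, if_neg (by omega)]


lemma geom_block (a U : ℕ) (ha : a ≤ U + 1) :
    (∑ i ∈ Finset.Icc a U, (X : Polynomial ℝ) ^ i) * (1 - X)
      = X ^ a - X ^ (U + 1) := by
  have h1 : Finset.Icc a U = Finset.Ico a (U + 1) := by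
    rw [Finset.Ico_add_one_right_eq_Icc]
  rw [h1, Finset.sum_Ico_eq_sub _ ha]
  have g : ∀ m : ℕ, (∑ i ∈ range m, (X : Polynomial ℝ) ^ i) * (1 - X) = 1 - X ^ m := by
    intro m
    have := geom_sum_mul (X : Polynomial ℝ) m
    calc (∑ i ∈ range m, (X : Polynomial ℝ) ^ i) * (1 - X)
        = -((∑ i ∈ range m, (X : Polynomial ℝ) ^ i) * (X - 1)) := by ring
      _ = 1 - X ^ m := by rw [this]; ring
  rw [sub_mul, g, g]
  ring

lemma coefSum {n lam : ℕ} (hn : 1 ≤ n) (hlam : 1 ≤ lam) (mv : Fin n → ℕ)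
    (h1 : ∀ j, 1 ≤ mv j) (hs : ∑ j, mv j ≤ lam + n - 1) :
    ∑ l ∈ (Fintype.piFinset fun _ : Fin n => Finset.Icc 1 (lam + n)).filter
        (fun l => (lam ≤ ∑ j, l j ∧ ∑ j, l j ≤ lam + n - 1) ∧ ∀ j, mv j ≤ l j),
      ((-1 : ℝ) ^ (lam + n - 1 - ∑ j, l j) * ((n - 1).choose (lam + n - 1 - ∑ j, l j) : ℝ))
      = 1 := by
  set M := lam + n - 1 with hM
  have hmvj : ∀ j, mv j ≤ lam + n := by
    intro j
    calc mv j ≤ ∑ j, mv j := Finset.single_le_sum (fun j _ => Nat.zero_le (mv j)) (mem_univ j)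
    _ ≤ lam + n := by omega
  -- Step 1 : drop the lower bound condition
  have step1 : ∑ l ∈ (Fintype.piFinset fun _ : Fin n => Finset.Icc 1 (lam + n)).filter
        (fun l => (lam ≤ ∑ j, l j ∧ ∑ j, l j ≤ M) ∧ ∀ j, mv j ≤ l j),
      ((-1 : ℝ) ^ (M - ∑ j, l j) * ((n - 1).choose (M - ∑ j, l j) : ℝ))
      = ∑ l ∈ (Fintype.piFinset fun _ : Fin n => Finset.Icc 1 (lam + n)).filter
        (fun l => (∑ j, l j ≤ M) ∧ ∀ j, mv j ≤ l j),
      ((-1 : ℝ) ^ (M - ∑ j, l j) * ((n - 1).choose (M - ∑ j, l j) : ℝ)) := by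
    refine Finset.sum_subset ?_ ?_
    · intro l hl
      simp only [mem_filter] at hl ⊢
      tauto
    · intro l hl hnl
      simp only [mem_filter] at hl hnl
      have hlow : ¬ lam ≤ ∑ j, l j := by tauto
      rw [Nat.choose_eq_zero_of_lt (by omega)]
      push_cast
      ring
  rw [step1]
  -- Step 2 : change the domain to a product of intervals
  have step2 : (Fintype.piFinset fun _ : Fin n => Finset.Icc 1 (lam + n)).filter
        (fun l => (∑ j, l j ≤ M) ∧ ∀ j, mv j ≤ l j)
      = (Fintype.piFinset fun j : Fin n => Finset.Icc (mv j) (lam + n)).filter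
        (fun l => ∑ j, l j ≤ M) := by
    ext l
    simp only [mem_filter, Fintype.mem_piFinset, Finset.mem_Icc]
    constructor
    · rintro ⟨h, hMl, hmv⟩
      exact ⟨fun j => ⟨hmv j, (h j).2⟩, hMl⟩
    · rintro ⟨h, hMl⟩
      exact ⟨fun j => ⟨le_trans (h1 j) (h j).1, (h j).2⟩, hMl, fun j => (h j).1⟩
  rw [step2, Finset.sum_filter]
  -- Step 3 : the sum is a coefficient of a polynomial
  set F : Polynomial ℝ := ∏ j, ∑ i ∈ Finset.Icc (mv j) (lam + n), X ^ i with hFdef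
  have hF : F = ∑ l ∈ Fintype.piFinset (fun j : Fin n => Finset.Icc (mv j) (lam + n)),
      X ^ (∑ j, l j) := by
    rw [hFdef, Finset.prod_univ_sum]
    exact Finset.sum_congr rfl fun l _ => Finset.prod_pow_eq_pow_sum _ _ _
  have step3 : (F * (1 - X) ^ (n - 1)).coeff M
      = ∑ l ∈ Fintype.piFinset (fun j : Fin n => Finset.Icc (mv j) (lam + n)),
        if ∑ j, l j ≤ M then
          ((-1 : ℝ) ^ (M - ∑ j, l j) * ((n - 1).choose (M - ∑ j, l j) : ℝ)) else 0 := by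
    rw [hF, Finset.sum_mul, finset_sum_coeff]
    refine Finset.sum_congr rfl fun l _ => ?_
    rw [Polynomial.coeff_X_pow_mul']
    split_ifs with h
    · rw [coeff_one_sub_X_pow]
    · rfl
  rw [← step3]
  -- Step 4 : key factorization
  have step4 : (F * (1 - X) ^ (n - 1)) * (1 - X)
      = ∏ j, ((X : Polynomial ℝ) ^ mv j - X ^ (lam + n + 1)) := by
    have hn' : n - 1 + 1 = n := by omega
    calc (F * (1 - X) ^ (n - 1)) * (1 - X) = F * (1 - X) ^ (n - 1 + 1) := by ring
    _ = F * ∏ _j : Fin n, (1 - X : Polynomial ℝ) := by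
        rw [hn', Finset.prod_const, Finset.card_univ, Fintype.card_fin]
    _ = ∏ j, ((∑ i ∈ Finset.Icc (mv j) (lam + n), (X : Polynomial ℝ) ^ i) * (1 - X)) := by
        rw [hFdef, Finset.prod_mul_distrib]
    _ = ∏ j, ((X : Polynomial ℝ) ^ mv j - X ^ (lam + n + 1)) := by
        exact Finset.prod_congr rfl fun j _ => geom_block _ _ (by have := hmvj j; omega)
  -- Step 5 : compute the coefficient
  rw [coeff_of_mul_one_sub _ _ step4 M]
  rw [Finset.sum_congr rfl (fun t ht => coeff_prod_X_pow_sub (lam + n + 1) mv t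
    (by simp only [mem_range] at ht; omega))]
  rw [Finset.sum_ite_eq' (range (M + 1)) (∑ j, mv j) (fun _ => (1 : ℝ))]
  rw [if_pos (by simp only [mem_range]; omega)]

lemma smolyak_core {n lam : ℕ} (hn : 1 ≤ n) (hlam : 1 ≤ lam)
    (q : Fin n → ℕ → ℝ) (I : Fin n → ℝ) (m : Fin n → ℕ)
    (hm1 : ∀ j, 1 ≤ m j) (hq : ∀ j l, m j ≤ l → q j l = I j)
    (hsum : ∑ j, m j ≤ lam + n - 1) :
    ∑ l ∈ (Fintype.piFinset fun _ : Fin n => Finset.Icc 1 (lam + n)).filter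
        (fun l => lam ≤ ∑ j, l j ∧ ∑ j, l j ≤ lam + n - 1),
      ((-1 : ℝ) ^ (lam + n - 1 - ∑ j, l j)) *
        ((n - 1).choose (lam + n - 1 - ∑ j, l j) : ℝ) * ∏ j, q j (l j)
      = ∏ j, I j := by
  classical
  set A := (Fintype.piFinset fun _ : Fin n => Finset.Icc 1 (lam + n)).filter
      (fun l => lam ≤ ∑ j, l j ∧ ∑ j, l j ≤ lam + n - 1) with hA
  set E := Fintype.piFinset fun _ : Fin n => Finset.Icc 1 (lam + n) with hE
  set c : (Fin n → ℕ) → ℝ := fun l => ((-1 : ℝ) ^ (lam + n - 1 - ∑ j, l j)) *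
      ((n - 1).choose (lam + n - 1 - ∑ j, l j) : ℝ) with hc
  set Q0 : Fin n → ℕ → ℝ := fun j i => if i = 0 then 0 else q j i with hQ0
  set d : Fin n → ℕ → ℝ := fun j i => Q0 j i - Q0 j (i - 1) with hd
  have hmlam : ∀ j, m j ≤ lam + n := by
    intro j
    calc m j ≤ ∑ j, m j := Finset.single_le_sum (fun j _ => Nat.zero_le (m j)) (mem_univ j)
    _ ≤ lam + n := by omega
  -- telescoping
  have htel : ∀ j l, 1 ≤ l → ∑ i ∈ Finset.Icc 1 l, d j i = q j l := by
    intro j l hl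
    rw [← Finset.Ico_add_one_right_eq_Icc, Finset.sum_Ico_eq_sum_range]
    have : ∀ i ∈ range (l + 1 - 1), d j (1 + i) = Q0 j (i + 1) - Q0 j i := by
      intro i _
      rw [hd]
      simp only []
      rw [show 1 + i = i + 1 from by omega, show i + 1 - 1 = i from by omega]
    rw [Finset.sum_congr rfl this]
    have hl1 : l + 1 - 1 = l := by omega
    rw [hl1, Finset.sum_range_sub (Q0 j), hQ0]
    simp only []
    rw [if_neg (show ¬ l = 0 by omega)]
    simp
  have hd0 : ∀ j i, m j < i → d j i = 0 := by
    intro j i hi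
    have h1 : Q0 j i = I j := by
      rw [hQ0]; simp only []
      rw [if_neg (by omega)]
      exact hq j i (by omega)
    have h2 : Q0 j (i - 1) = I j := by
      rw [hQ0]; simp only []
      rw [if_neg (by have := hm1 j; omega)]
      exact hq j (i - 1) (by omega)
    rw [hd]; simp only []
    rw [h1, h2, sub_self]
  -- expand each product of q's into a sum over difference indices
  have expand : ∀ l ∈ A, c l * ∏ j, q j (l j)
      = ∑ e ∈ E, if (∀ j, e j ≤ l j) then c l * ∏ j, d j (e j) else 0 := by
    intro l hl
    have hlmem : ∀ j, 1 ≤ l j ∧ l j ≤ lam + n := by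
      rw [hA, hE] at hl
      simp only [mem_filter, Fintype.mem_piFinset, Finset.mem_Icc] at hl
      exact fun j => hl.1 j
    have h1 : ∏ j, q j (l j) = ∏ j, ∑ i ∈ Finset.Icc 1 (l j), d j i :=
      Finset.prod_congr rfl fun j _ => (htel j (l j) (hlmem j).1).symm
    have h2 : Fintype.piFinset (fun j => Finset.Icc 1 (l j))
        = E.filter (fun e => ∀ j, e j ≤ l j) := by
      ext e
      simp only [hE, mem_filter, Fintype.mem_piFinset, Finset.mem_Icc]
      constructor
      · intro h
        exact ⟨fun j => ⟨(h j).1, le_trans (h j).2 (hlmem j).2⟩, fun j => (h j).2⟩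
      · intro h
        exact fun j => ⟨((h.1) j).1, h.2 j⟩
    rw [h1, Finset.prod_univ_sum, h2, Finset.sum_filter, Finset.mul_sum]
    refine Finset.sum_congr rfl fun e _ => ?_
    split_ifs with h
    · rfl
    · ring
  rw [Finset.sum_congr rfl expand, Finset.sum_comm]
  -- evaluate the inner coefficient sums
  have inner : ∀ e ∈ E, (∑ l ∈ A, if (∀ j, e j ≤ l j) then c l * ∏ j, d j (e j) else 0)
      = (if (∀ j, e j ≤ m j) then ∏ j, d j (e j) else 0) := by
    intro e he
    have he' : ∀ j, 1 ≤ e j ∧ e j ≤ lam + n := by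
      rw [hE] at he
      simp only [Fintype.mem_piFinset, Finset.mem_Icc] at he
      exact he
    rw [← Finset.sum_filter]
    by_cases hem : ∀ j, e j ≤ m j
    · rw [if_pos hem]
      have hsum' : (∑ l ∈ A.filter (fun l => ∀ j, e j ≤ l j), c l) = 1 := by
        have := coefSum hn hlam e (fun j => (he' j).1)
          (le_trans (Finset.sum_le_sum fun j _ => hem j) hsum)
        rw [hA, Finset.filter_filter]
        exact this
      calc (∑ l ∈ A.filter (fun l => ∀ j, e j ≤ l j), c l * ∏ j, d j (e j))
          = (∑ l ∈ A.filter (fun l => ∀ j, e j ≤ l j), c l) * ∏ j, d j (e j) := by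
            rw [Finset.sum_mul]
        _ = ∏ j, d j (e j) := by rw [hsum', one_mul]
    · rw [if_neg hem]
      push_neg at hem
      obtain ⟨j0, hj0⟩ := hem
      have : ∏ j, d j (e j) = 0 :=
        Finset.prod_eq_zero (mem_univ j0) (hd0 j0 (e j0) hj0)
      simp [this]
  rw [Finset.sum_congr rfl inner, ← Finset.sum_filter]
  have hEm : E.filter (fun e => ∀ j, e j ≤ m j)
      = Fintype.piFinset (fun j => Finset.Icc 1 (m j)) := by
    ext e
    simp only [hE, mem_filter, Fintype.mem_piFinset, Finset.mem_Icc]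
    constructor
    · intro h
      exact fun j => ⟨(h.1 j).1, h.2 j⟩
    · intro h
      exact ⟨fun j => ⟨(h j).1, le_trans (h j).2 (hmlam j)⟩, fun j => (h j).2⟩
  rw [hEm, ← Finset.prod_univ_sum]
  exact Finset.prod_congr rfl fun j _ => by rw [htel j (m j) (hm1 j), hq j (m j) le_rfl]


lemma integrable_pi_prod {n : ℕ} (P : Fin n → Measure ℝ) [∀ j, IsProbabilityMeasure (P j)]
    (f : Fin n → ℝ → ℝ) (hf : ∀ j, Integrable (f j) (P j)) :
    Integrable (fun y : Fin n → ℝ => ∏ j, f j (y j)) (Measure.pi P) := by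
  induction n with
  | zero =>
      simp only [Finset.univ_eq_empty, Finset.prod_empty]
      exact integrable_const 1
  | succ n ih =>
      have hmp := (measurePreserving_piFinSuccAbove P 0).symm
      rw [← hmp.integrable_comp_emb (MeasurableEquiv.measurableEmbedding _)]
      simp_rw [MeasurableEquiv.piFinSuccAbove_symm_apply, Fin.insertNthEquiv,
        Fin.prod_univ_succ, Fin.insertNth_zero]
      simp only [Fin.zero_succAbove, cast_eq, Function.comp_def, Fin.cons_zero, Fin.cons_succ]
      exact Integrable.mul_prod (hf 0) (ih (fun j => P j.succ) (fun j => f j.succ)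
        (fun j => hf j.succ))

variable {n : ℕ} (K : Fin n → ℕ → ℕ)
    (x : ∀ (j : Fin n) (l : ℕ), Fin (K j l) → ℝ)
    (v : ∀ (j : Fin n) (l : ℕ), Fin (K j l) → ℝ)

lemma tensorRule_sum {ι : Type*} (s : Finset ι) (c : ι → ℝ) (f : ι → (Fin n → ℝ) → ℝ)
    (l : Fin n → ℕ) :
    tensorRule K x v l (fun y => ∑ a ∈ s, c a * f a y)
      = ∑ a ∈ s, c a * tensorRule K x v l (f a) := by
  unfold tensorRule
  simp only [Finset.mul_sum]
  rw [Finset.sum_comm]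
  refine Finset.sum_congr rfl fun a _ => Finset.sum_congr rfl fun k _ => by ring

lemma smolyakRule_sum {ι : Type*} (s : Finset ι) (c : ι → ℝ) (f : ι → (Fin n → ℝ) → ℝ)
    (lam : ℕ) :
    smolyakRule K x v lam (fun y => ∑ a ∈ s, c a * f a y)
      = ∑ a ∈ s, c a * smolyakRule K x v lam (f a) := by
  unfold smolyakRule
  rw [Finset.sum_congr rfl (fun l _ => by
    rw [tensorRule_sum, Finset.mul_sum])]
  rw [Finset.sum_comm]
  refine Finset.sum_congr rfl fun a _ => ?_
  rw [Finset.mul_sum]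
  refine Finset.sum_congr rfl fun l _ => by ring

lemma tensorRule_monomial (l α : Fin n → ℕ) :
    tensorRule K x v l (fun y => ∏ j, y j ^ α j)
      = ∏ j, (∑ k : Fin (K j (l j)), v j (l j) k * x j (l j) k ^ α j) := by
  rw [tensorRule, Finset.prod_univ_sum]
  refine Finset.sum_congr rfl fun k _ => ?_
  rw [Finset.prod_mul_distrib]

theorem integral_pi_prod {n : ℕ} (P : Fin n → Measure ℝ) [∀ j, SigmaFinite (P j)]
    (f : Fin n → ℝ → ℝ) :
    ∫ y : Fin n → ℝ, ∏ j, f j (y j) ∂(Measure.pi P) = ∏ j, ∫ t, f j t ∂(P j) := by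
  induction n with
  | zero => simp [measureReal_def, Measure.pi_univ]
  | succ n ih =>
      calc
        _ = ∫ x : ℝ × (Fin n → ℝ),
            f 0 x.1 * ∏ i : Fin n, f i.succ (x.2 i) ∂((P 0).prod (Measure.pi fun i => P i.succ)) := by
          rw [← ((measurePreserving_piFinSuccAbove P 0).symm).integral_comp']
          simp_rw [MeasurableEquiv.piFinSuccAbove_symm_apply, Fin.insertNthEquiv,
            Fin.prod_univ_succ, Fin.insertNth_zero, Equiv.coe_fn_mk, Fin.cons_succ,
            Fin.zero_succAbove, Fin.cons_zero, cast_eq]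
        _ = (∫ x, f 0 x ∂(P 0)) * ∏ i : Fin n, ∫ x, f i.succ x ∂(P i.succ) := by
          rw [← ih, ← integral_prod_mul]
        _ = ∏ i, ∫ x, f i x ∂(P i) := by rw [Fin.prod_univ_succ]

end Aux

/-- If, for each coordinate `j` and each level `l ≥ 1`, the univariate
quadrature rule `Q_j^{λ_l}` integrates exactly univariate polynomials of degree `≤ 2l−1`
with respect to `P_j`, then the Smolyak sparse-grid rule of level `λ` integrates exactly all
multivariate polynomials of total degree `≤ 2λ−1` with respect to `P = P_1 × ... × P_n`. -/
theorem stmt_11 {n : ℕ} (hn : 1 ≤ n)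
    (P : Fin n → Measure ℝ) [∀ j, IsProbabilityMeasure (P j)]
    (K : Fin n → ℕ → ℕ)
    (x : ∀ (j : Fin n) (l : ℕ), Fin (K j l) → ℝ)
    (v : ∀ (j : Fin n) (l : ℕ), Fin (K j l) → ℝ)
    (hexact : ∀ (j : Fin n) (l : ℕ), 1 ≤ l → ∀ p : Polynomial ℝ,
      p.natDegree ≤ 2 * l - 1 →
      (∑ k : Fin (K j l), v j l k * p.eval (x j l k)) = ∫ t, p.eval t ∂(P j))
    (hint : ∀ (j : Fin n) (p : Polynomial ℝ), Integrable (fun t => p.eval t) (P j))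
    (lam : ℕ) (hlam : 1 ≤ lam) :
    ∀ p : MvPolynomial (Fin n) ℝ, p.totalDegree ≤ 2 * lam - 1 →
      smolyakRule K x v lam (fun y => MvPolynomial.eval y p) =
        ∫ y, MvPolynomial.eval y p ∂(Measure.pi P) := by
  intro p hp
  classical
  have hrep : (fun y : Fin n → ℝ => MvPolynomial.eval y p)
      = fun y => ∑ α ∈ p.support, MvPolynomial.coeff α p * ∏ j, y j ^ α j := by
    funext y
    rw [MvPolynomial.eval_eq']
  rw [hrep, smolyakRule_sum]
  have hintmono : ∀ α : Fin n →₀ ℕ,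
      Integrable (fun y : Fin n → ℝ => ∏ j, y j ^ α j) (Measure.pi P) := by
    intro α
    exact integrable_pi_prod P (fun j t => t ^ α j)
      (fun j => by
        have h := hint j (Polynomial.X ^ α j)
        simp only [Polynomial.eval_pow, Polynomial.eval_X] at h
        exact h)
  rw [integral_finset_sum p.support (fun α _ => ((hintmono α).const_mul _))]
  refine Finset.sum_congr rfl fun α hα => ?_
  rw [integral_const_mul]
  congr 1
  -- now handle a single monomial
  have hαdeg : ∑ j, α j ≤ 2 * lam - 1 := by
    have h1 : (α.sum fun _ e => e) ≤ p.totalDegree := MvPolynomial.le_totalDegree hα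
    have h2 : (α.sum fun _ e => e) = ∑ j, α j :=
      Finsupp.sum_fintype _ _ (fun _ => rfl)
    rw [h2] at h1
    exact le_trans h1 hp
  set m : Fin n → ℕ := fun j => α j / 2 + 1 with hm
  set q : Fin n → ℕ → ℝ := fun j l => ∑ k : Fin (K j l), v j l k * x j l k ^ α j with hqd
  set I : Fin n → ℝ := fun j => ∫ t, t ^ α j ∂(P j) with hI
  have hq : ∀ j l, m j ≤ l → q j l = I j := by
    intro j l hl
    have hl' : α j / 2 + 1 ≤ l := hl
    have hαj : α j ≤ 2 * l - 1 := by omega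
    have := hexact j l (by omega) (Polynomial.X ^ α j)
      (by rw [Polynomial.natDegree_X_pow]; exact hαj)
    simp only [Polynomial.eval_pow, Polynomial.eval_X] at this
    exact this
  have hsum : ∑ j, m j ≤ lam + n - 1 := by
    have h2 : ∀ j : Fin n, 2 * (α j / 2) ≤ α j := fun j => by omega
    have h3 : 2 * (∑ j, α j / 2) ≤ ∑ j, α j := by
      rw [Finset.mul_sum]
      exact Finset.sum_le_sum fun j _ => by omega
    have h4 : (∑ j, m j) = (∑ j, α j / 2) + n := by
      rw [hm, Finset.sum_add_distrib, Finset.sum_const, Finset.card_univ, Fintype.card_fin,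
        smul_eq_mul, mul_one]
    omega
  have hmono : smolyakRule K x v lam (fun y => ∏ j, y j ^ α j) = ∏ j, I j := by
    rw [smolyakRule]
    rw [Finset.sum_congr rfl (fun l _ => by rw [tensorRule_monomial])]
    exact smolyak_core hn hlam q I m (fun j => Nat.le_add_left 1 _) hq hsum
  rw [hmono]
  exact (integral_pi_prod P (fun j t => t ^ α j)).symm
end
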